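/- arXiv:2105.07199 — 6 statements merged into one kernel-verified Lean document; each statement's English description precedes it below -/
import Mathlib

section
/- Let R be an mN×mN symmetric positive definite matrix, Q a pN×pN symmetric positive semidefinite matrix, and λ_u, λ_y > 0. Let Ū_P ∈ ℝ^{mT_ini×H_c}, Ȳ_P ∈ ℝ^{pT_ini×H_c}, Ū_F ∈ ℝ^{mN×H_c}, Ȳ_F ∈ ℝ^{pN×H_c} be matrices, and ū_ini ∈ ℝ^{mT_ini}, ȳ_ini ∈ ℝ^{pT_ini}, u_sys ∈ ℝ^{mN}, y_sys ∈ ℝ^{pN}, r ∈ ℝ^{pN}, g* ∈ ℝ^{H_c} vectors. Assume: (i) there exists ḡ ∈ ℝ^{H_c} with Ū_P ḡ = ū_ini, Ȳ_P ḡ = ȳ_ini, Ū_F ḡ = u_sys, Ȳ_F ḡ = y_sys; (ii) there exist matrices K ∈ ℝ^{pN×(m+p)T_ini} and T ∈ ℝ^{pN×mN} such that for every Δ ∈ ℝ^{H_c}, Ȳ_F Δ = K·col(Ū_P Δ, Ȳ_P Δ) + T·(Ū_F Δ); (iii) the block-diagonal matrix Λ := diag(λ_u I_{mT_ini}, λ_y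 I_{pT_ini}) satisfies Λ ⪰ KᵀQK; (iv) ‖u_sys − Ū_F g*‖ ≤ η_p for some η_p ≥ 0; (v) the scalar c_opt ≥ 0 satisfies c_opt ≥ ‖Ū_F g*‖_R² + ‖Ȳ_F g* − r‖_Q² + λ_u‖Ū_P g* − ū_ini‖² + λ_y‖Ȳ_P g* − ȳ_ini‖². Then 2√c_opt + η_p(√2·‖I_{mN}‖_R + ‖T‖_Q) ≥ √(‖u_sys‖_R² + ‖y_sys − r‖_Q²). -/
open Matrix

set_option maxHeartbeats 2000000

/-- Euclidean norm of a vector in `ℝ^n`. -/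
noncomputable def enorm2 {n : ℕ} (x : Fin n → ℝ) : ℝ := Real.sqrt (∑ i, x i ^ 2)

/-- The positive semidefinite square root of a positive semidefinite matrix
(the definition `Matrix.PosSemidef.sqrt` of the older Mathlib, since removed). -/
noncomputable def Matrix.PosSemidef.sqrt {n : Type*} [Fintype n] [DecidableEq n]
    {A : Matrix n n ℝ} (hA : A.PosSemidef) : Matrix n n ℝ :=
  hA.1.eigenvectorUnitary.1 * diagonal ((↑) ∘ (Real.sqrt ∘ hA.1.eigenvalues)) *
    (star hA.1.eigenvectorUnitary : Matrix n n ℝ)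

/-- Induced 2-norm of a real matrix. -/
noncomputable def opNorm2 {m n : ℕ} (M : Matrix (Fin m) (Fin n) ℝ) : ℝ :=
  sSup {c | ∃ x : Fin n → ℝ, enorm2 x ≤ 1 ∧ c = enorm2 (M.mulVec x)}

lemma enorm2_eq_norm {n : ℕ} (x : Fin n → ℝ) :
    enorm2 x = ‖(WithLp.equiv 2 (Fin n → ℝ)).symm x‖ := by
  rw [EuclideanSpace.norm_eq, enorm2]
  congr 1
  refine Finset.sum_congr rfl fun i _ => ?_
  rw [Real.norm_eq_abs, sq_abs]; rfl

lemma enorm2_nonneg {n : ℕ} (x : Fin n → ℝ) : 0 ≤ enorm2 x := Real.sqrt_nonneg _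

lemma enorm2_sq {n : ℕ} (x : Fin n → ℝ) : enorm2 x ^ 2 = x ⬝ᵥ x := by
  rw [enorm2, Real.sq_sqrt (by positivity)]
  simp [dotProduct, sq]

noncomputable def mulVecCLM {m n : ℕ} (M : Matrix (Fin m) (Fin n) ℝ) :
    EuclideanSpace ℝ (Fin n) →L[ℝ] EuclideanSpace ℝ (Fin m) :=
  LinearMap.toContinuousLinearMap (Matrix.toEuclideanLin M)

lemma mulVecCLM_apply {m n : ℕ} (M : Matrix (Fin m) (Fin n) ℝ) (x : Fin n → ℝ) :
    mulVecCLM M ((WithLp.equiv 2 (Fin n → ℝ)).symm x)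
      = (WithLp.equiv 2 (Fin m → ℝ)).symm (M.mulVec x) := by
  simp [mulVecCLM, Matrix.toEuclideanLin_apply]

lemma enorm2_mulVec_eq {m n : ℕ} (M : Matrix (Fin m) (Fin n) ℝ) (x : Fin n → ℝ) :
    enorm2 (M.mulVec x) = ‖mulVecCLM M ((WithLp.equiv 2 (Fin n → ℝ)).symm x)‖ := by
  rw [mulVecCLM_apply, enorm2_eq_norm]

lemma bddAbove_opSet {m n : ℕ} (M : Matrix (Fin m) (Fin n) ℝ) :
    BddAbove {c | ∃ x : Fin n → ℝ, enorm2 x ≤ 1 ∧ c = enorm2 (M.mulVec x)} := by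
  refine ⟨‖mulVecCLM M‖, fun c hc => ?_⟩
  obtain ⟨x, hx, rfl⟩ := hc
  rw [enorm2_mulVec_eq]
  calc ‖mulVecCLM M ((WithLp.equiv 2 (Fin n → ℝ)).symm x)‖
      ≤ ‖mulVecCLM M‖ * ‖(WithLp.equiv 2 (Fin n → ℝ)).symm x‖ :=
        (mulVecCLM M).le_opNorm _
    _ ≤ ‖mulVecCLM M‖ * 1 := by
        apply mul_le_mul_of_nonneg_left _ (norm_nonneg _)
        rw [← enorm2_eq_norm]; exact hx
    _ = ‖mulVecCLM M‖ := mul_one _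

lemma opNorm2_nonneg {m n : ℕ} (M : Matrix (Fin m) (Fin n) ℝ) : 0 ≤ opNorm2 M := by
  apply le_csSup (bddAbove_opSet M)
  exact ⟨0, by simp [enorm2], by simp [enorm2]⟩

lemma enorm2_smul {n : ℕ} (c : ℝ) (x : Fin n → ℝ) : enorm2 (c • x) = |c| * enorm2 x := by
  rw [enorm2_eq_norm, enorm2_eq_norm]
  have : (WithLp.equiv 2 (Fin n → ℝ)).symm (c • x)
      = c • (WithLp.equiv 2 (Fin n → ℝ)).symm x := rfl
  rw [this, norm_smul, Real.norm_eq_abs]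

lemma enorm2_mulVec_le {m n : ℕ} (M : Matrix (Fin m) (Fin n) ℝ) (x : Fin n → ℝ) :
    enorm2 (M.mulVec x) ≤ opNorm2 M * enorm2 x := by
  rcases eq_or_ne (enorm2 x) 0 with h0 | h0
  · have hx : x = 0 := by
      have := enorm2_eq_norm x
      rw [h0] at this
      have : (WithLp.equiv 2 (Fin n → ℝ)).symm x = 0 := by
        simpa using (norm_eq_zero.mp this.symm)
      simpa using congrArg (WithLp.equiv 2 (Fin n → ℝ)) this
    simp [hx, h0, enorm2]
  · have hpos : 0 < enorm2 x := lt_of_le_of_ne (enorm2_nonneg x) (Ne.symm h0)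
    have hmem : enorm2 (M.mulVec ((enorm2 x)⁻¹ • x))
        ∈ {c | ∃ y : Fin n → ℝ, enorm2 y ≤ 1 ∧ c = enorm2 (M.mulVec y)} := by
      refine ⟨(enorm2 x)⁻¹ • x, ?_, rfl⟩
      rw [enorm2_smul, abs_of_pos (inv_pos.mpr hpos), inv_mul_cancel₀ h0]
    have hle := le_csSup (bddAbove_opSet M) hmem
    rw [Matrix.mulVec_smul, enorm2_smul, abs_of_pos (inv_pos.mpr hpos)] at hle
    calc enorm2 (M.mulVec x) = enorm2 x * ((enorm2 x)⁻¹ * enorm2 (M.mulVec x)) := by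
          field_simp
      _ ≤ enorm2 x * opNorm2 M := by
          apply mul_le_mul_of_nonneg_left hle (enorm2_nonneg x)
      _ = opNorm2 M * enorm2 x := mul_comm _ _

lemma enorm2_triangle {n : ℕ} (x y : Fin n → ℝ) : enorm2 (x + y) ≤ enorm2 x + enorm2 y := by
  rw [enorm2_eq_norm, enorm2_eq_norm, enorm2_eq_norm]
  have : (WithLp.equiv 2 (Fin n → ℝ)).symm (x + y)
      = (WithLp.equiv 2 (Fin n → ℝ)).symm x + (WithLp.equiv 2 (Fin n → ℝ)).symm y := rfl
  rw [this]; exact norm_add_le _ _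

lemma Matrix.PosSemidef.sqrt_mul_self' {k : ℕ} {S : Matrix (Fin k) (Fin k) ℝ}
    (hS : S.PosSemidef) : hS.sqrt * hS.sqrt = S := by
  unfold Matrix.PosSemidef.sqrt
  have hU : (star hS.1.eigenvectorUnitary : Matrix (Fin k) (Fin k) ℝ) * hS.1.eigenvectorUnitary.1 = 1 :=
    Unitary.coe_star_mul_self _
  conv_rhs => rw [hS.1.spectral_theorem, Unitary.conjStarAlgAut_apply]
  simp only [Matrix.mul_assoc]
  rw [← Matrix.mul_assoc _ hS.1.eigenvectorUnitary.1, hU, Matrix.one_mul,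
    ← Matrix.mul_assoc (diagonal _), diagonal_mul_diagonal]
  congr 3
  funext i
  simp [Real.mul_self_sqrt (hS.eigenvalues_nonneg i)]

lemma Matrix.PosSemidef.sqrt_isHermitian' {k : ℕ} {S : Matrix (Fin k) (Fin k) ℝ}
    (hS : S.PosSemidef) : hS.sqrt.IsHermitian := by
  unfold Matrix.PosSemidef.sqrt
  simp only [Matrix.IsHermitian, conjTranspose_mul, Matrix.star_eq_conjTranspose,
    conjTranspose_conjTranspose, diagonal_conjTranspose, star_trivial, Matrix.mul_assoc]

lemma quadform_eq {k : ℕ} {S : Matrix (Fin k) (Fin k) ℝ} (hS : S.PosSemidef)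
    (x : Fin k → ℝ) : x ⬝ᵥ S.mulVec x = enorm2 (hS.sqrt.mulVec x) ^ 2 := by
  rw [enorm2_sq]
  conv_lhs => rw [← hS.sqrt_mul_self', ← Matrix.mulVec_mulVec, Matrix.dotProduct_mulVec]
  rw [← Matrix.vecMul_transpose]
  congr 1
  rw [← Matrix.conjTranspose_eq_transpose_of_trivial, hS.sqrt_isHermitian']

lemma fin_append_neg {a b : ℕ} (x : Fin a → ℝ) (y : Fin b → ℝ) :
    Fin.append (-x) (-y) = -Fin.append x y := by
  funext i
  refine Fin.addCases (fun j => ?_) (fun j => ?_) i <;>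
    simp [Fin.append_left, Fin.append_right]

lemma enorm2_neg {n : ℕ} (x : Fin n → ℝ) : enorm2 (-x) = enorm2 x := by
  simp [enorm2]

/-- Theorem 1 of the paper: performance guarantee of robust DeePC. -/
theorem robust_deepc_performance_guarantee
    (mN pN mTini pTini Hc : ℕ)
    (R : Matrix (Fin mN) (Fin mN) ℝ) (hR : R.PosDef)
    (Q : Matrix (Fin pN) (Fin pN) ℝ) (hQ : Q.PosSemidef)
    (lu ly : ℝ) (hlu : 0 < lu) (hly : 0 < ly)
    (UP : Matrix (Fin mTini) (Fin Hc) ℝ) (YP : Matrix (Fin pTini) (Fin Hc) ℝ)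
    (UF : Matrix (Fin mN) (Fin Hc) ℝ) (YF : Matrix (Fin pN) (Fin Hc) ℝ)
    (uini : Fin mTini → ℝ) (yini : Fin pTini → ℝ)
    (usys : Fin mN → ℝ) (ysys : Fin pN → ℝ) (r : Fin pN → ℝ)
    (gs : Fin Hc → ℝ)
    (K : Matrix (Fin pN) (Fin (mTini + pTini)) ℝ)
    (T : Matrix (Fin pN) (Fin mN) ℝ)
    (ηp copt : ℝ) (hηp : 0 ≤ ηp) (hcopt0 : 0 ≤ copt)
    -- (i) the realized trajectory lies in the image of the perfect data matrices
    (h1 : ∃ gbar : Fin Hc → ℝ,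
      UP.mulVec gbar = uini ∧ YP.mulVec gbar = yini ∧
      UF.mulVec gbar = usys ∧ YF.mulVec gbar = ysys)
    -- (ii) ARX relation between past data, future inputs and future outputs
    (h2 : ∀ Δ : Fin Hc → ℝ,
      YF.mulVec Δ =
        K.mulVec (Fin.append (UP.mulVec Δ) (YP.mulVec Δ)) + T.mulVec (UF.mulVec Δ))
    -- (iii) Λ ⪰ KᵀQK
    (h3 : (Matrix.diagonal
            (Fin.append (fun _ : Fin mTini => lu) (fun _ : Fin pTini => ly))
            - Kᵀ * Q * K).PosSemidef)
    -- (iv) bounded input disturbance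
    (h4 : enorm2 (usys - UF.mulVec gs) ≤ ηp)
    -- (v) lower bound on the optimal cost
    (h5 : copt ≥ (UF.mulVec gs) ⬝ᵥ R.mulVec (UF.mulVec gs)
            + (YF.mulVec gs - r) ⬝ᵥ Q.mulVec (YF.mulVec gs - r)
            + lu * (enorm2 (UP.mulVec gs - uini)) ^ 2
            + ly * (enorm2 (YP.mulVec gs - yini)) ^ 2) :
    2 * Real.sqrt copt
      + ηp * (Real.sqrt 2 * opNorm2 (hR.posSemidef.sqrt * (1 : Matrix (Fin mN) (Fin mN) ℝ))
              + opNorm2 (hQ.sqrt * T))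
      ≥ Real.sqrt (usys ⬝ᵥ R.mulVec usys + (ysys - r) ⬝ᵥ Q.mulVec (ysys - r)) := by
  obtain ⟨gbar, hUP, hYP, hUF, hYF⟩ := h1
  set Sr := hR.posSemidef.sqrt with hSrdef
  set Sq := hQ.sqrt with hSqdef
  set du := UP.mulVec gs - uini with hdu
  set dy := YP.mulVec gs - yini with hdy
  set ev := usys - UF.mulVec gs with hev
  set a := enorm2 (Sr.mulVec (UF.mulVec gs)) with hadef
  set b := enorm2 (Sq.mulVec (YF.mulVec gs - r)) with hbdef
  set α := opNorm2 (Sr * (1 : Matrix (Fin mN) (Fin mN) ℝ)) with hαdef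
  set β := opNorm2 (Sq * T) with hβdef
  have hα : 0 ≤ α := opNorm2_nonneg _
  have hβ : 0 ≤ β := opNorm2_nonneg _
  have ha : 0 ≤ a := enorm2_nonneg _
  have hb : 0 ≤ b := enorm2_nonneg _
  have hc2 : 0 ≤ lu * enorm2 du ^ 2 + ly * enorm2 dy ^ 2 := by positivity
  set c := Real.sqrt (lu * enorm2 du ^ 2 + ly * enorm2 dy ^ 2) with hcdef
  have hc : 0 ≤ c := Real.sqrt_nonneg _
  have hcsq : c ^ 2 = lu * enorm2 du ^ 2 + ly * enorm2 dy ^ 2 := Real.sq_sqrt hc2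
  -- cost bound
  have e1 : (UF.mulVec gs) ⬝ᵥ R.mulVec (UF.mulVec gs) = a ^ 2 :=
    quadform_eq hR.posSemidef _
  have e2 : (YF.mulVec gs - r) ⬝ᵥ Q.mulVec (YF.mulVec gs - r) = b ^ 2 :=
    quadform_eq hQ _
  have hcopt : a ^ 2 + b ^ 2 + c ^ 2 ≤ copt := by
    rw [hcsq]; rw [e1, e2] at h5; linarith
  -- input part
  have hX : enorm2 (Sr.mulVec usys) ≤ a + α * ηp := by
    have husys : UF.mulVec gs + ev = usys := by
      rw [hev, add_comm, sub_add_cancel]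
    have hdec : Sr.mulVec usys
        = Sr.mulVec (UF.mulVec gs) + (Sr * (1 : Matrix (Fin mN) (Fin mN) ℝ)).mulVec ev := by
      rw [Matrix.mul_one, ← Matrix.mulVec_add, husys]
    rw [hdec]
    refine le_trans (enorm2_triangle _ _) ?_
    have h := le_trans (enorm2_mulVec_le (Sr * (1 : Matrix (Fin mN) (Fin mN) ℝ)) ev)
      (mul_le_mul_of_nonneg_left h4 hα)
    linarith
  -- output part
  set w : Fin (mTini + pTini) → ℝ := Fin.append (-du) (-dy) with hwdef
  have hw : YF.mulVec gbar - YF.mulVec gs = K.mulVec w + T.mulVec ev := by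
    have h := h2 (gbar - gs)
    rw [Matrix.mulVec_sub, Matrix.mulVec_sub, Matrix.mulVec_sub, Matrix.mulVec_sub,
      hUP, hYP, hUF] at h
    rw [h, hwdef, hev, hdu, hdy]
    congr 2
    · rw [neg_sub, neg_sub]
  have hy : ysys - r = (YF.mulVec gs - r) + K.mulVec w + T.mulVec ev := by
    rw [← hYF, add_assoc, ← hw]; abel
  have hQy : Sq.mulVec (ysys - r)
      = Sq.mulVec (YF.mulVec gs - r) + Sq.mulVec (K.mulVec w) + (Sq * T).mulVec ev := by
    rw [hy, Matrix.mulVec_add, Matrix.mulVec_add, ← Matrix.mulVec_mulVec]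
  -- bound on the K term via h3
  have hKq : w ⬝ᵥ (Kᵀ * Q * K).mulVec w = enorm2 (Sq.mulVec (K.mulVec w)) ^ 2 := by
    conv_lhs => rw [← Matrix.mulVec_mulVec, ← Matrix.mulVec_mulVec, Matrix.dotProduct_mulVec,
      Matrix.vecMul_transpose]
    rw [quadform_eq hQ]
  have hΛ : w ⬝ᵥ (Kᵀ * Q * K).mulVec w
      ≤ w ⬝ᵥ (Matrix.diagonal
          (Fin.append (fun _ : Fin mTini => lu) (fun _ : Fin pTini => ly))).mulVec w := by
    have h := h3.dotProduct_mulVec_nonneg w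
    simp only [star_trivial, Matrix.sub_mulVec, dotProduct_sub] at h
    linarith
  have hΛval : w ⬝ᵥ (Matrix.diagonal
      (Fin.append (fun _ : Fin mTini => lu) (fun _ : Fin pTini => ly))).mulVec w
      = lu * enorm2 du ^ 2 + ly * enorm2 dy ^ 2 := by
    simp only [dotProduct, Matrix.mulVec_diagonal]
    rw [Fin.sum_univ_add]
    have hsq : ∀ {k : ℕ} (v : Fin k → ℝ), enorm2 v ^ 2 = ∑ i, v i ^ 2 := fun v => by
      rw [enorm2, Real.sq_sqrt (by positivity)]
    simp only [hwdef, Fin.append_left, Fin.append_right]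
    rw [hsq du, hsq dy, Finset.mul_sum, Finset.mul_sum]
    congr 1 <;> (apply Finset.sum_congr rfl; intros; simp; ring)
  have hK : enorm2 (Sq.mulVec (K.mulVec w)) ≤ c := by
    have hsqle : enorm2 (Sq.mulVec (K.mulVec w)) ^ 2 ≤ c ^ 2 := by
      rw [← hKq, hcsq]; exact le_of_le_of_eq hΛ hΛval
    nlinarith [enorm2_nonneg (Sq.mulVec (K.mulVec w)), hc]
  have hT : enorm2 ((Sq * T).mulVec ev) ≤ β * ηp :=
    le_trans (enorm2_mulVec_le _ _) (mul_le_mul_of_nonneg_left h4 hβ)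
  have hY : enorm2 (Sq.mulVec (ysys - r)) ≤ b + c + β * ηp := by
    rw [hQy]
    have t1 := enorm2_triangle (Sq.mulVec (YF.mulVec gs - r) + Sq.mulVec (K.mulVec w))
      ((Sq * T).mulVec ev)
    have t2 := enorm2_triangle (Sq.mulVec (YF.mulVec gs - r)) (Sq.mulVec (K.mulVec w))
    linarith
  -- conclusion
  have gX : usys ⬝ᵥ R.mulVec usys = enorm2 (Sr.mulVec usys) ^ 2 :=
    quadform_eq hR.posSemidef usys
  have gY : (ysys - r) ⬝ᵥ Q.mulVec (ysys - r) = enorm2 (Sq.mulVec (ysys - r)) ^ 2 :=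
    quadform_eq hQ _
  rw [ge_iff_le, gX, gY]
  set X := enorm2 (Sr.mulVec usys) with hXdef
  set Y := enorm2 (Sq.mulVec (ysys - r)) with hYdef
  clear_value Sr Sq du dy ev a b α β c w X Y
  have hXnn : 0 ≤ X := by rw [hXdef]; exact enorm2_nonneg _
  have hYnn : 0 ≤ Y := by rw [hYdef]; exact enorm2_nonneg _
  have hstep1 : Real.sqrt (X ^ 2 + Y ^ 2) ≤ X + Y := by
    rw [← Real.sqrt_sq (add_nonneg hXnn hYnn)]
    apply Real.sqrt_le_sqrt
    nlinarith [mul_nonneg hXnn hYnn]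
  have habc : a + b + c ≤ 2 * Real.sqrt copt := by
    have h4c : a + b + c ≤ Real.sqrt (4 * copt) := by
      rw [Real.le_sqrt (add_nonneg (add_nonneg ha hb) hc) (by linarith)]
      nlinarith [sq_nonneg (a - b), sq_nonneg (b - c), sq_nonneg (a - c)]
    rwa [show (4 : ℝ) * copt = 2 ^ 2 * copt by norm_num,
      Real.sqrt_mul (by norm_num), Real.sqrt_sq (by norm_num)] at h4c
  have h12 : (1 : ℝ) ≤ Real.sqrt 2 := by
    rw [show (1 : ℝ) = Real.sqrt 1 by simp]
    exact Real.sqrt_le_sqrt (by norm_num)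
  have hαmul : ηp * α ≤ ηp * (Real.sqrt 2 * α) :=
    mul_le_mul_of_nonneg_left (le_mul_of_one_le_left hα h12) hηp
  have hexp : ηp * (Real.sqrt 2 * α + β) = ηp * (Real.sqrt 2 * α) + ηp * β := by ring
  calc Real.sqrt (X ^ 2 + Y ^ 2) ≤ X + Y := hstep1
    _ ≤ (a + α * ηp) + (b + c + β * ηp) := add_le_add hX hY
    _ ≤ 2 * Real.sqrt copt + ηp * (Real.sqrt 2 * α + β) := by
        rw [hexp]; linarith
end

section
/- Let R be an mN×mN symmetric positive definite matrix, Q a pN×pN symmetric positive semidefinite matrix, and λ_u, λ_y > 0. Let Ū_P ∈ ℝ^{mT_ini×H_c}, Ȳ_P ∈ ℝ^{pT_ini×H_c}, Ū_F ∈ ℝ^{mN×H_c}, Ȳ_F ∈ ℝ^{pN×H_c} be matrices, and ū_ini, ȳ_ini, u_sys, y_sys, r, g* vectors of compatible dimensions with u_sys = Ū_F g*. Assume: (i) there exists ḡ ∈ ℝ^{H_c} with Ū_P ḡ = ū_ini, Ȳ_P ḡ = ȳ_ini, Ū_F ḡ = u_sys, Ȳ_F ḡ = y_sys; (ii) there exist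 matrices K and T such that for every Δ ∈ ℝ^{H_c}, Ȳ_F Δ = K·col(Ū_P Δ, Ȳ_P Δ) + T·(Ū_F Δ); (iii) Λ := diag(λ_u I_{mT_ini}, λ_y I_{pT_ini}) ⪰ KᵀQK; (iv) the scalar c_opt ≥ 0 satisfies c_opt ≥ ‖Ū_F g*‖_R² + ‖Ȳ_F g* − r‖_Q² + λ_u‖Ū_P g* − ū_ini‖² + λ_y‖Ȳ_P g* − ȳ_ini‖². Then 2·c_opt ≥ ‖u_sys‖_R² + ‖y_sys − r‖_Q². -/
open Matrix

/-- Euclidean norm of a vector in `ℝ^n`. -/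
noncomputable def enormR {n : ℕ} (x : Fin n → ℝ) : ℝ := Real.sqrt (∑ i, x i ^ 2)

lemma enormR_sq {n : ℕ} (x : Fin n → ℝ) : (enormR x) ^ 2 = ∑ i, x i ^ 2 := by
  exact Real.sq_sqrt (Finset.sum_nonneg fun i _ => sq_nonneg _)

lemma psd_sub_sq {n : ℕ} (Q : Matrix (Fin n) (Fin n) ℝ) (hQ : Q.PosSemidef)
    (a b : Fin n → ℝ) :
    (a - b) ⬝ᵥ Q.mulVec (a - b) ≤ 2 * (a ⬝ᵥ Q.mulVec a) + 2 * (b ⬝ᵥ Q.mulVec b) := by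
  have hsym : Qᵀ = Q := hQ.1
  have hs : a ⬝ᵥ Q.mulVec b = b ⬝ᵥ Q.mulVec a := by
    rw [dotProduct_mulVec, ← mulVec_transpose, hsym, dotProduct_comm]
  have h1 := hQ.dotProduct_mulVec_nonneg (a + b)
  simp only [mulVec_add, mulVec_sub, dotProduct_add, dotProduct_sub, add_dotProduct,
    sub_dotProduct, star_trivial] at h1 ⊢
  linarith

/-- Corollary 1 of the paper: performance guarantee of robust DeePC in the absence of
input disturbance. -/
theorem robust_deepc_performance_guarantee_no_input_disturbance
    (mN pN mTini pTini Hc : ℕ)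
    (R : Matrix (Fin mN) (Fin mN) ℝ) (hR : R.PosDef)
    (Q : Matrix (Fin pN) (Fin pN) ℝ) (hQ : Q.PosSemidef)
    (lu ly : ℝ) (hlu : 0 < lu) (hly : 0 < ly)
    (UP : Matrix (Fin mTini) (Fin Hc) ℝ) (YP : Matrix (Fin pTini) (Fin Hc) ℝ)
    (UF : Matrix (Fin mN) (Fin Hc) ℝ) (YF : Matrix (Fin pN) (Fin Hc) ℝ)
    (uini : Fin mTini → ℝ) (yini : Fin pTini → ℝ)
    (usys : Fin mN → ℝ) (ysys : Fin pN → ℝ) (r : Fin pN → ℝ)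
    (gs : Fin Hc → ℝ)
    (K : Matrix (Fin pN) (Fin (mTini + pTini)) ℝ)
    (T : Matrix (Fin pN) (Fin mN) ℝ)
    (copt : ℝ) (hcopt0 : 0 ≤ copt)
    -- no input disturbance: the realized input equals the planned input
    (husys : usys = UF.mulVec gs)
    -- (i) the realized trajectory lies in the image of the perfect data matrices
    (h1 : ∃ gbar : Fin Hc → ℝ,
      UP.mulVec gbar = uini ∧ YP.mulVec gbar = yini ∧
      UF.mulVec gbar = usys ∧ YF.mulVec gbar = ysys)
    -- (ii) ARX relation between past data, future inputs and future outputs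
    (h2 : ∀ Δ : Fin Hc → ℝ,
      YF.mulVec Δ =
        K.mulVec (Fin.append (UP.mulVec Δ) (YP.mulVec Δ)) + T.mulVec (UF.mulVec Δ))
    -- (iii) Λ ⪰ KᵀQK
    (h3 : (Matrix.diagonal
            (Fin.append (fun _ : Fin mTini => lu) (fun _ : Fin pTini => ly))
            - Kᵀ * Q * K).PosSemidef)
    -- (iv) lower bound on the optimal cost
    (h4 : copt ≥ (UF.mulVec gs) ⬝ᵥ R.mulVec (UF.mulVec gs)
            + (YF.mulVec gs - r) ⬝ᵥ Q.mulVec (YF.mulVec gs - r)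
            + lu * (enormR (UP.mulVec gs - uini)) ^ 2
            + ly * (enormR (YP.mulVec gs - yini)) ^ 2) :
    2 * copt ≥ usys ⬝ᵥ R.mulVec usys + (ysys - r) ⬝ᵥ Q.mulVec (ysys - r) := by
  obtain ⟨gbar, hup, hyp, huf, hyf⟩ := h1
  set Δ := gs - gbar with hΔ
  have hUFΔ : UF.mulVec Δ = 0 := by
    rw [hΔ, mulVec_sub, huf, husys, sub_self]
  set eu : Fin mTini → ℝ := UP.mulVec gs - uini with heu
  set ey : Fin pTini → ℝ := YP.mulVec gs - yini with hey
  have hUPΔ : UP.mulVec Δ = eu := by rw [hΔ, mulVec_sub, hup]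
  have hYPΔ : YP.mulVec Δ = ey := by rw [hΔ, mulVec_sub, hyp]
  set e : Fin (mTini + pTini) → ℝ := Fin.append eu ey with he
  have hYFΔ : YF.mulVec Δ = K.mulVec e := by
    rw [h2 Δ, hUFΔ, mulVec_zero, add_zero, hUPΔ, hYPΔ]
  have hysys : ysys - r = (YF.mulVec gs - r) - K.mulVec e := by
    rw [← hYFΔ, hΔ, mulVec_sub, hyf]
    abel
  -- bound the Q-term of K e by the Λ-term
  have hKe : (K.mulVec e) ⬝ᵥ Q.mulVec (K.mulVec e)
      ≤ lu * (∑ i, eu i ^ 2) + ly * (∑ i, ey i ^ 2) := by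
    have h := h3.dotProduct_mulVec_nonneg e
    simp only [star_trivial, sub_mulVec, dotProduct_sub] at h
    have hdiag : e ⬝ᵥ (Matrix.diagonal
        (Fin.append (fun _ : Fin mTini => lu) (fun _ : Fin pTini => ly))).mulVec e
        = lu * (∑ i, eu i ^ 2) + ly * (∑ i, ey i ^ 2) := by
      simp only [he, dotProduct, mulVec_diagonal, Fin.sum_univ_add, Fin.append_left,
        Fin.append_right, Finset.mul_sum]
      ring_nf
      congr 1 <;> apply Finset.sum_congr rfl <;> intro i _ <;> ring
    have hquad : e ⬝ᵥ (Kᵀ * Q * K).mulVec e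
        = (K.mulVec e) ⬝ᵥ Q.mulVec (K.mulVec e) := by
      rw [← mulVec_mulVec, ← mulVec_mulVec, dotProduct_mulVec, ← mulVec_transpose,
        transpose_transpose]
    rw [hdiag, hquad] at h
    linarith
  have hQbound : (ysys - r) ⬝ᵥ Q.mulVec (ysys - r)
      ≤ 2 * ((YF.mulVec gs - r) ⬝ᵥ Q.mulVec (YF.mulVec gs - r))
        + 2 * ((K.mulVec e) ⬝ᵥ Q.mulVec (K.mulVec e)) := by
    rw [hysys]
    exact psd_sub_sq Q hQ _ _
  have hRterm : usys ⬝ᵥ R.mulVec usys = (UF.mulVec gs) ⬝ᵥ R.mulVec (UF.mulVec gs) := by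
    rw [husys]
  have hRnn : 0 ≤ (UF.mulVec gs) ⬝ᵥ R.mulVec (UF.mulVec gs) := by
    have := hR.posSemidef.dotProduct_mulVec_nonneg (UF.mulVec gs)
    simpa using this
  rw [enormR_sq, enormR_sq] at h4
  rw [ge_iff_le, hRterm]
  calc (UF.mulVec gs) ⬝ᵥ R.mulVec (UF.mulVec gs) + (ysys - r) ⬝ᵥ Q.mulVec (ysys - r)
      ≤ 2 * ((UF.mulVec gs) ⬝ᵥ R.mulVec (UF.mulVec gs))
        + 2 * ((YF.mulVec gs - r) ⬝ᵥ Q.mulVec (YF.mulVec gs - r))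
        + 2 * (lu * (∑ i, eu i ^ 2) + ly * (∑ i, ey i ^ 2)) := by linarith
    _ ≤ 2 * copt := by rw [heu, hey] at h4 ⊢; linarith
end

section
/- Let R be an mN×mN symmetric positive definite matrix, Q a pN×pN symmetric positive semidefinite matrix, and λ_u, λ_y > 0. Let Ū_P, Ȳ_P, Ū_F, Ȳ_F be matrices and ū_ini, ȳ_ini, u_sys, y_sys, r, g* vectors of compatible dimensions, and set ε := u_sys − Ū_F g*. Assume: (i) there exists ḡ with Ū_P ḡ = ū_ini, Ȳ_P ḡ = ȳ_ini, Ū_F ḡ = u_sys, Ȳ_F ḡ = y_sys; (ii) there exist matrices K and T such that for every Δ ∈ ℝ^{H_c}, Ȳ_F Δ = K·col(Ū_P Δ, Ȳ_P Δ) + T·(Ū_F Δ); (iii) Λ := diag(λ_u I_{mT_ini}, λ_y I_{pT_ini}) ⪰ KᵀQK; (iv) the scalar c_opt satisfies c_opt ≥ ‖Ū_F g*‖_R² + ‖Ȳ_F g* − r‖_Q² + λ_u‖Ū_P g* − ū_ini‖² + λ_y‖Ȳ_P g* − ȳ_ini‖². Then c_opt ≥ ‖u_sys − ε‖_R² + (1/2)·‖y_sys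 − r − Tε‖_Q². -/
open Matrix

/-- Euclidean norm of a vector in `ℝ^n`. -/
noncomputable def euclidNorm {n : ℕ} (x : Fin n → ℝ) : ℝ := Real.sqrt (∑ i, x i ^ 2)

/-- The key intermediate inequality (eq. (12)) in the proof of Theorem 1 of the paper. -/
theorem robust_deepc_key_inequality
    (mN pN mTini pTini Hc : ℕ)
    (R : Matrix (Fin mN) (Fin mN) ℝ) (hR : R.PosDef)
    (Q : Matrix (Fin pN) (Fin pN) ℝ) (hQ : Q.PosSemidef)
    (lu ly : ℝ) (hlu : 0 < lu) (hly : 0 < ly)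
    (UP : Matrix (Fin mTini) (Fin Hc) ℝ) (YP : Matrix (Fin pTini) (Fin Hc) ℝ)
    (UF : Matrix (Fin mN) (Fin Hc) ℝ) (YF : Matrix (Fin pN) (Fin Hc) ℝ)
    (uini : Fin mTini → ℝ) (yini : Fin pTini → ℝ)
    (usys : Fin mN → ℝ) (ysys : Fin pN → ℝ) (r : Fin pN → ℝ)
    (gs : Fin Hc → ℝ)
    (K : Matrix (Fin pN) (Fin (mTini + pTini)) ℝ)
    (T : Matrix (Fin pN) (Fin mN) ℝ)
    (copt : ℝ)
    (ε : Fin mN → ℝ) (hε : ε = usys - UF.mulVec gs)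
    -- (i) the realized trajectory lies in the image of the perfect data matrices
    (h1 : ∃ gbar : Fin Hc → ℝ,
      UP.mulVec gbar = uini ∧ YP.mulVec gbar = yini ∧
      UF.mulVec gbar = usys ∧ YF.mulVec gbar = ysys)
    -- (ii) ARX relation between past data, future inputs and future outputs
    (h2 : ∀ Δ : Fin Hc → ℝ,
      YF.mulVec Δ =
        K.mulVec (Fin.append (UP.mulVec Δ) (YP.mulVec Δ)) + T.mulVec (UF.mulVec Δ))
    -- (iii) Λ ⪰ KᵀQK
    (h3 : (Matrix.diagonal
            (Fin.append (fun _ : Fin mTini => lu) (fun _ : Fin pTini => ly))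
            - Kᵀ * Q * K).PosSemidef)
    -- (iv) lower bound on the optimal cost
    (h4 : copt ≥ (UF.mulVec gs) ⬝ᵥ R.mulVec (UF.mulVec gs)
            + (YF.mulVec gs - r) ⬝ᵥ Q.mulVec (YF.mulVec gs - r)
            + lu * (euclidNorm (UP.mulVec gs - uini)) ^ 2
            + ly * (euclidNorm (YP.mulVec gs - yini)) ^ 2) :
    copt ≥ (usys - ε) ⬝ᵥ R.mulVec (usys - ε)
      + (1 / 2) * ((ysys - r - T.mulVec ε) ⬝ᵥ Q.mulVec (ysys - r - T.mulVec ε)) := by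

  obtain ⟨gbar, hUP, hYP, hUF, hYF⟩ := h1
  set Δ : Fin Hc → ℝ := gbar - gs with hΔ
  have hUPΔ : UP.mulVec Δ = uini - UP.mulVec gs := by
    rw [hΔ, Matrix.mulVec_sub, hUP]
  have hYPΔ : YP.mulVec Δ = yini - YP.mulVec gs := by
    rw [hΔ, Matrix.mulVec_sub, hYP]
  have hUFΔ : UF.mulVec Δ = ε := by
    rw [hΔ, Matrix.mulVec_sub, hUF, hε]
  have hYFΔ : YF.mulVec Δ = ysys - YF.mulVec gs := by
    rw [hΔ, Matrix.mulVec_sub, hYF]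
  set z : Fin (mTini + pTini) → ℝ := Fin.append (UP.mulVec Δ) (YP.mulVec Δ) with hz
  have key := h2 Δ
  rw [hYFΔ, hUFΔ, ← hz] at key
  -- usys - ε = UF gs
  have husys : usys - ε = UF.mulVec gs := by rw [hε, sub_sub_cancel]
  -- decomposition of the output error
  have hsplit : ysys - r - T.mulVec ε = (YF.mulVec gs - r) + K.mulVec z := by
    funext i
    have h := congrFun key i
    simp only [Pi.sub_apply, Pi.add_apply] at h ⊢
    linarith
  -- b Q b = z (KᵀQK) z
  have hbQb : (K.mulVec z) ⬝ᵥ Q.mulVec (K.mulVec z)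
      = z ⬝ᵥ (Kᵀ * Q * K).mulVec z := by
    rw [Matrix.mul_assoc, ← Matrix.mulVec_mulVec]
    simp only [Matrix.dotProduct_mulVec, Matrix.vecMul_transpose, Matrix.vecMul_vecMul,
      Matrix.mulVec_mulVec]
    conv_rhs => rw [← Matrix.vecMul_vecMul, Matrix.vecMul_transpose, ← Matrix.vecMul_vecMul]
    rw [Matrix.vecMul_vecMul]
  -- z Λ z ≥ z (KᵀQK) z
  have hΛ : z ⬝ᵥ (Kᵀ * Q * K).mulVec z
      ≤ z ⬝ᵥ (Matrix.diagonal
          (Fin.append (fun _ : Fin mTini => lu) (fun _ : Fin pTini => ly))).mulVec z := by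
    have h := h3.dotProduct_mulVec_nonneg z
    simp only [star_trivial, Matrix.sub_mulVec, dotProduct_sub] at h
    linarith
  -- compute z Λ z
  have hΛval : z ⬝ᵥ (Matrix.diagonal
        (Fin.append (fun _ : Fin mTini => lu) (fun _ : Fin pTini => ly))).mulVec z
      = lu * (euclidNorm (UP.mulVec gs - uini)) ^ 2 + ly * (euclidNorm (YP.mulVec gs - yini)) ^ 2 := by
    have e1 : (euclidNorm (UP.mulVec gs - uini)) ^ 2 = ∑ i, (UP.mulVec gs - uini) i ^ 2 := by
      rw [euclidNorm, Real.sq_sqrt (Finset.sum_nonneg fun i _ => sq_nonneg _)]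
    have e2 : (euclidNorm (YP.mulVec gs - yini)) ^ 2 = ∑ i, (YP.mulVec gs - yini) i ^ 2 := by
      rw [euclidNorm, Real.sq_sqrt (Finset.sum_nonneg fun i _ => sq_nonneg _)]
    rw [e1, e2, dotProduct, Fin.sum_univ_add]
    simp only [Matrix.mulVec_diagonal, hz, Fin.append_left, Fin.append_right,
      hUPΔ, hYPΔ, Finset.mul_sum]
    congr 1 <;> apply Finset.sum_congr rfl <;> intro i _ <;>
      simp only [Pi.sub_apply] <;> ring
  -- quadratic inequality: (a+b)Q(a+b) ≤ 2aQa + 2bQb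
  have hquad : ∀ a b : Fin pN → ℝ,
      (a + b) ⬝ᵥ Q.mulVec (a + b) ≤ 2 * (a ⬝ᵥ Q.mulVec a) + 2 * (b ⬝ᵥ Q.mulVec b) := by
    intro a b
    have h := hQ.dotProduct_mulVec_nonneg (a - b)
    simp only [star_trivial, Matrix.mulVec_sub, Matrix.mulVec_add,
      dotProduct_sub, dotProduct_add, sub_dotProduct,
      add_dotProduct] at h ⊢
    linarith
  have hmain := hquad (YF.mulVec gs - r) (K.mulVec z)
  rw [husys, hsplit]
  rw [hbQb] at hmain
  linarith
end

section
/- Let A ∈ ℝ^{m×n}, b ∈ ℝ^m, g ∈ ℝ^n, let Ā ∈ ℝ^{m×n} and b̄ ∈ ℝ^m have nonnegative entries, and define the interval uncertainty set 𝒟_int := { (ΔA, Δb) : |ΔA_{ij}| ≤ Ā_{ij} for all (i,j), |Δb_i| ≤ b̄_i for all i }. Then sup_{(ΔA,Δb) ∈ 𝒟_int} ‖(A + ΔA)g − (b + Δb)‖ = ‖v‖, where v ∈ ℝ^m is the vector with entries v_i = |(Ag − b)_i| + b̄_i + Σ_{j=1}^{n} Ā_{ij}·|g_j|, and this supremum is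 attained. -/
open Matrix

/-- Euclidean norm of a vector in `ℝ^n`. -/
noncomputable def vecEnorm {n : ℕ} (x : Fin n → ℝ) : ℝ := Real.sqrt (∑ i, x i ^ 2)

/-- Worst-case evaluation underlying Proposition 3 of the paper: interval uncertainties.
The supremum equals `‖v‖` with `v_i = |(Ag − b)_i| + b̄_i + Σ_j Ā_{ij}|g_j|`, and is
attained. -/
theorem worst_case_interval
    (m n : ℕ) (A : Matrix (Fin m) (Fin n) ℝ) (b : Fin m → ℝ) (g : Fin n → ℝ)
    (Abar : Matrix (Fin m) (Fin n) ℝ) (hAbar : ∀ i j, 0 ≤ Abar i j)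
    (bbar : Fin m → ℝ) (hbbar : ∀ i, 0 ≤ bbar i) :
    IsGreatest
      {c | ∃ (ΔA : Matrix (Fin m) (Fin n) ℝ) (Δb : Fin m → ℝ),
        (∀ i j, |ΔA i j| ≤ Abar i j) ∧ (∀ i, |Δb i| ≤ bbar i) ∧
        c = vecEnorm ((A + ΔA).mulVec g - (b + Δb))}
      (vecEnorm (fun i => |(A.mulVec g - b) i| + bbar i + ∑ j, Abar i j * |g j|)) := by
  classical
  set r : Fin m → ℝ := A.mulVec g - b with hr
  set sgn : ℝ → ℝ := fun x => if x < 0 then -1 else 1 with hsgn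
  have hsgn_mul : ∀ x : ℝ, sgn x * x = |x| := by
    intro x
    by_cases h : x < 0
    · simp [hsgn, h, abs_of_neg h]
    · simp [hsgn, h, abs_of_nonneg (not_lt.mp h)]
  have hsgn_abs : ∀ x : ℝ, |sgn x| = 1 := by
    intro x
    by_cases h : x < 0 <;> simp [hsgn, h]
  have hsgn_sq : ∀ x : ℝ, sgn x * sgn x = 1 := by
    intro x
    by_cases h : x < 0 <;> simp [hsgn, h]
  constructor
  · -- membership: worst-case attained
    set ΔA0 : Matrix (Fin m) (Fin n) ℝ :=
      Matrix.of fun i j => sgn (r i) * (Abar i j * sgn (g j)) with hΔA0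
    set Δb0 : Fin m → ℝ := fun i => -(sgn (r i) * bbar i) with hΔb0
    have hA0 : ∀ i j, ΔA0 i j = sgn (r i) * (Abar i j * sgn (g j)) := fun i j => rfl
    refine ⟨ΔA0, Δb0, ?_, ?_, ?_⟩
    · intro i j
      rw [hA0]
      rw [abs_mul, abs_mul, hsgn_abs, hsgn_abs, one_mul, mul_one,
        abs_of_nonneg (hAbar i j)]
    · intro i
      show |-(sgn (r i) * bbar i)| ≤ bbar i
      rw [abs_neg, abs_mul, hsgn_abs, one_mul, abs_of_nonneg (hbbar i)]
    · unfold vecEnorm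
      congr 1
      apply Finset.sum_congr rfl
      intro i _
      have hentry :
          ((A + ΔA0).mulVec g - (b + Δb0)) i
          = sgn (r i) * (|r i| + bbar i + ∑ j, Abar i j * |g j|) := by
        have hsum : ∑ j, ΔA0 i j * g j
            = sgn (r i) * ∑ j, Abar i j * |g j| := by
          rw [Finset.mul_sum]
          apply Finset.sum_congr rfl
          intro j _
          rw [hA0, ← hsgn_mul (g j)]
          ring
        have hri : r i = sgn (r i) * |r i| := by
          rw [← hsgn_mul (r i), ← mul_assoc, hsgn_sq, one_mul]
        simp only [Pi.sub_apply, Pi.add_apply, add_mulVec, mulVec, dotProduct]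
        rw [hsum]
        have hAg : ∑ x, A i x * g x = (A *ᵥ g) i := rfl
        have hrb : (A *ᵥ g) i - b i = r i := by simp [hr]
        rw [hAg]
        simp only [hΔb0]
        nlinarith [hri, hrb]
      rw [hentry, mul_pow]
      have : sgn (r i) ^ 2 = 1 := by rw [sq, hsgn_sq]
      rw [this, one_mul]
  · -- upper bound
    rintro c ⟨ΔA, Δb, hA, hb, rfl⟩
    unfold vecEnorm
    apply Real.sqrt_le_sqrt
    apply Finset.sum_le_sum
    intro i _
    have hv : 0 ≤ |r i| + bbar i + ∑ j, Abar i j * |g j| := by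
      have : 0 ≤ ∑ j, Abar i j * |g j| :=
        Finset.sum_nonneg fun j _ => mul_nonneg (hAbar i j) (abs_nonneg _)
      have := hbbar i
      positivity
    have habs : |((A + ΔA).mulVec g - (b + Δb)) i|
        ≤ |r i| + bbar i + ∑ j, Abar i j * |g j| := by
      have hentry : ((A + ΔA).mulVec g - (b + Δb)) i
          = r i + (∑ j, ΔA i j * g j) - Δb i := by
        simp only [Pi.sub_apply, Pi.add_apply, add_mulVec, mulVec, dotProduct, hr]
        ring
      rw [hentry]
      have h1 : |∑ j, ΔA i j * g j| ≤ ∑ j, Abar i j * |g j| := by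
        calc |∑ j, ΔA i j * g j| ≤ ∑ j, |ΔA i j * g j| := Finset.abs_sum_le_sum_abs _ _
          _ ≤ ∑ j, Abar i j * |g j| := by
            apply Finset.sum_le_sum
            intro j _
            rw [abs_mul]
            exact mul_le_mul_of_nonneg_right (hA i j) (abs_nonneg _)
      calc |r i + (∑ j, ΔA i j * g j) - Δb i|
          ≤ |r i + ∑ j, ΔA i j * g j| + |Δb i| := abs_sub _ _
        _ ≤ |r i| + |∑ j, ΔA i j * g j| + |Δb i| := by
            gcongr; exact abs_add_le _ _
        _ ≤ |r i| + (∑ j, Abar i j * |g j|) + bbar i := by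
            gcongr; exact hb i
        _ = |r i| + bbar i + ∑ j, Abar i j * |g j| := by ring
    have := abs_le.mp habs
    have h2 : (fun i => |r i| + bbar i + ∑ j, Abar i j * |g j|) i
        = |r i| + bbar i + ∑ j, Abar i j * |g j| := rfl
    calc (((A + ΔA).mulVec g - (b + Δb)) i) ^ 2
        ≤ (|r i| + bbar i + ∑ j, Abar i j * |g j|) ^ 2 :=
          sq_le_sq' this.1 this.2
      _ = _ := by rw [← h2]
end

section
/- Let A ∈ ℝ^{m×n}, b ∈ ℝ^m, let Ā ∈ ℝ^{m×n} and b̄ ∈ ℝ^m have nonnegative entries, and let 𝒢 ⊆ ℝ^n be nonempty. Define 𝒟_int := { (ΔA, Δb) : |ΔA_{ij}| ≤ Ā_{ij} for all (i,j), |Δb_i| ≤ b̄_i for all i } and W(g) := sup_{(ΔA,Δb) ∈ 𝒟_int} ‖(A + ΔA)g − (b + Δb)‖². Then: (a) inf_{g ∈ 𝒢} W(g) equals the infimum of ‖γ + b̄ + Āν‖² over all triples (g, γ, ν) with g ∈ 𝒢, γ ∈ ℝ^m, ν ∈ ℝ^n satisfying −γ ≤ Ag − b ≤ γ (entrywise)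 and −ν ≤ g ≤ ν (entrywise); and (b) g* ∈ 𝒢 attains inf_{g ∈ 𝒢} W(g) if and only if there exist (γ*, ν*) such that (g*, γ*, ν*) attains the latter infimum, in which case inf_{g ∈ 𝒢} W(g) = ‖γ* + b̄ + Āν*‖². -/
open Matrix

/-- Euclidean norm of a vector in `ℝ^n`. -/
noncomputable def enorm {n : ℕ} (x : Fin n → ℝ) : ℝ := Real.sqrt (∑ i, x i ^ 2)

lemma enorm_sq {n : ℕ} (x : Fin n → ℝ) : _root_.enorm x ^ 2 = ∑ i, x i ^ 2 :=
  Real.sq_sqrt (Finset.sum_nonneg fun i _ => sq_nonneg _)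

lemma enorm_sq_nonneg {n : ℕ} (x : Fin n → ℝ) : 0 ≤ _root_.enorm x ^ 2 := sq_nonneg _

lemma sign_trick (a c : ℝ) (hc : 0 ≤ c) :
    (a + (if 0 ≤ a then (1:ℝ) else -1) * c) ^ 2 = (|a| + c) ^ 2 := by
  by_cases h : 0 ≤ a
  · simp [h, abs_of_nonneg h]
  · simp only [h, if_false]
    rw [abs_of_neg (lt_of_not_ge h)]
    ring

/-- Proposition 3 of the paper: the min-max robust problem with interval uncertainties is
equivalent to a convex quadratic program with auxiliary variables `γ` and `ν`. -/
theorem minmax_interval_equiv_qp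
    (m n : ℕ) (A : Matrix (Fin m) (Fin n) ℝ) (b : Fin m → ℝ)
    (Abar : Matrix (Fin m) (Fin n) ℝ) (hAbar : ∀ i j, 0 ≤ Abar i j)
    (bbar : Fin m → ℝ) (hbbar : ∀ i, 0 ≤ bbar i)
    (𝒢 : Set (Fin n → ℝ)) (h𝒢 : 𝒢.Nonempty)
    (W : (Fin n → ℝ) → ℝ)
    (hW : ∀ g, W g = sSup {c | ∃ (ΔA : Matrix (Fin m) (Fin n) ℝ) (Δb : Fin m → ℝ),
        (∀ i j, |ΔA i j| ≤ Abar i j) ∧ (∀ i, |Δb i| ≤ bbar i) ∧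
        c = (_root_.enorm ((A + ΔA).mulVec g - (b + Δb))) ^ 2})
    (feas : Set ((Fin n → ℝ) × (Fin m → ℝ) × (Fin n → ℝ)))
    (hfeas : feas = {t | t.1 ∈ 𝒢 ∧
        (∀ i, -(t.2.1 i) ≤ (A.mulVec t.1 - b) i ∧ (A.mulVec t.1 - b) i ≤ t.2.1 i) ∧
        (∀ j, -(t.2.2 j) ≤ t.1 j ∧ t.1 j ≤ t.2.2 j)})
    (obj : ((Fin n → ℝ) × (Fin m → ℝ) × (Fin n → ℝ)) → ℝ)
    (hobj : ∀ t, obj t = (_root_.enorm (t.2.1 + bbar + Abar.mulVec t.2.2)) ^ 2) :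
    -- (a) the optimal values coincide
    sInf (W '' 𝒢) = sInf (obj '' feas) ∧
    -- (b) minimizer characterization
    (∀ gs ∈ 𝒢, (∀ g ∈ 𝒢, W gs ≤ W g) ↔
        ∃ γ ν, (gs, γ, ν) ∈ feas ∧ ∀ t ∈ feas, obj (gs, γ, ν) ≤ obj t) ∧
    -- ... in which case the optimal value is `‖γ* + b̄ + Āν*‖²`
    (∀ gs γ ν, (gs, γ, ν) ∈ feas → (∀ t ∈ feas, obj (gs, γ, ν) ≤ obj t) →
        sInf (W '' 𝒢) = (_root_.enorm (γ + bbar + Abar.mulVec ν)) ^ 2) := by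
  -- canonical auxiliary variables
  set γ₀ : (Fin n → ℝ) → Fin m → ℝ := fun g i => |(A.mulVec g - b) i| with hγ₀
  set ν₀ : (Fin n → ℝ) → Fin n → ℝ := fun g j => |g j| with hν₀
  -- key identity : W g = obj (g, γ₀ g, ν₀ g)
  have hWeq : ∀ g, W g = obj (g, γ₀ g, ν₀ g) := by
    intro g
    rw [hW, hobj]
    apply IsGreatest.csSup_eq
    constructor
    · -- achieved by a sign choice
      set s : Fin m → ℝ := fun i => if 0 ≤ (A.mulVec g - b) i then (1:ℝ) else -1 with hs
      set t : Fin n → ℝ := fun j => if 0 ≤ g j then (1:ℝ) else -1 with ht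
      have hsabs : ∀ i, |s i| = 1 := by
        intro i
        show |if 0 ≤ (A.mulVec g - b) i then (1:ℝ) else -1| = 1
        by_cases h : 0 ≤ (A.mulVec g - b) i
        · rw [if_pos h]; simp
        · rw [if_neg h]; simp
      have htg : ∀ j, t j * g j = |g j| := by
        intro j
        show (if 0 ≤ g j then (1:ℝ) else -1) * g j = |g j|
        by_cases h : 0 ≤ g j
        · rw [if_pos h, one_mul, abs_of_nonneg h]
        · rw [if_neg h, abs_of_neg (lt_of_not_ge h)]; ring
      refine ⟨Matrix.of (fun i j => s i * t j * Abar i j), fun i => -(s i * bbar i), ?_, ?_, ?_⟩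
      · intro i j
        simp only [Matrix.of_apply]
        rw [abs_mul, abs_mul, hsabs i, abs_of_nonneg (hAbar i j)]
        have : |t j| = 1 := by
          show |if 0 ≤ g j then (1:ℝ) else -1| = 1
          by_cases h : 0 ≤ g j
          · rw [if_pos h]; simp
          · rw [if_neg h]; simp
        rw [this]; ring_nf; rfl
      · intro i
        rw [abs_neg, abs_mul, hsabs i, abs_of_nonneg (hbbar i), one_mul]
      · rw [enorm_sq, enorm_sq]
        apply Finset.sum_congr rfl
        intro i _
        have hrow : ((A + Matrix.of (fun i j => s i * t j * Abar i j)).mulVec g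
            - (b + fun i => -(s i * bbar i))) i
            = (A.mulVec g - b) i + s i * ((Abar.mulVec (ν₀ g)) i + bbar i) := by
          simp only [Matrix.add_mulVec, Pi.sub_apply, Pi.add_apply, Matrix.mulVec,
            dotProduct, Matrix.of_apply]
          have : ∑ j, s i * t j * Abar i j * g j = s i * ∑ j, Abar i j * |g j| := by
            rw [Finset.mul_sum]
            apply Finset.sum_congr rfl
            intro j _
            rw [← htg j]; ring
          rw [this]
          simp [hν₀]
          ring
        rw [hrow]
        have hc : 0 ≤ (Abar.mulVec (ν₀ g)) i + bbar i := by
          apply add_nonneg _ (hbbar i)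
          simp only [Matrix.mulVec, dotProduct]
          apply Finset.sum_nonneg
          intro j _
          exact mul_nonneg (hAbar i j) (abs_nonneg _)
        have := sign_trick ((A.mulVec g - b) i) ((Abar.mulVec (ν₀ g)) i + bbar i) hc
        simp only [hs] at this ⊢
        rw [this]
        congr 1
        simp [hγ₀]
        ring
    · -- upper bound
      rintro c ⟨ΔA, Δb, h1, h2, rfl⟩
      rw [enorm_sq, enorm_sq]
      apply Finset.sum_le_sum
      intro i _
      have habs : |((A + ΔA).mulVec g - (b + Δb)) i|
          ≤ (γ₀ g + bbar + Abar.mulVec (ν₀ g)) i := by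
        have hrow : ((A + ΔA).mulVec g - (b + Δb)) i
            = (A.mulVec g - b) i + (ΔA.mulVec g i + -Δb i) := by
          simp only [Matrix.add_mulVec, Pi.sub_apply, Pi.add_apply]
          ring
        rw [hrow]
        refine (abs_add_le _ _).trans ?_
        have h3 : |ΔA.mulVec g i + -Δb i| ≤ (Abar.mulVec (ν₀ g)) i + bbar i := by
          refine (abs_add_le _ _).trans (add_le_add ?_ (by rw [abs_neg]; exact h2 i))
          simp only [Matrix.mulVec, dotProduct]
          refine (Finset.abs_sum_le_sum_abs _ _).trans ?_
          apply Finset.sum_le_sum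
          intro j _
          rw [abs_mul]
          exact mul_le_mul (h1 i j) le_rfl (abs_nonneg _)
            ((abs_nonneg _).trans (h1 i j))
        simp only [Pi.add_apply, hγ₀]
        linarith
      have h0 : 0 ≤ (γ₀ g + bbar + Abar.mulVec (ν₀ g)) i :=
        (abs_nonneg _).trans habs
      calc ((A + ΔA).mulVec g - (b + Δb)) i ^ 2
          = |((A + ΔA).mulVec g - (b + Δb)) i| ^ 2 := (sq_abs _).symm
        _ ≤ ((γ₀ g + bbar + Abar.mulVec (ν₀ g)) i) ^ 2 := by
            exact pow_le_pow_left₀ (abs_nonneg _) habs 2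
  -- feasibility of the canonical point
  have hfeas0 : ∀ g ∈ 𝒢, (g, γ₀ g, ν₀ g) ∈ feas := by
    intro g hg
    rw [hfeas]
    exact ⟨hg, fun i => ⟨neg_abs_le _, le_abs_self _⟩,
      fun j => ⟨neg_abs_le _, le_abs_self _⟩⟩
  -- the canonical point is optimal in (γ, ν) for its g
  have hle : ∀ t ∈ feas, obj (t.1, γ₀ t.1, ν₀ t.1) ≤ obj t := by
    intro t ht
    rw [hfeas] at ht
    obtain ⟨hg, hγ, hν⟩ := ht
    rw [hobj, hobj]
    rw [enorm_sq, enorm_sq]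
    apply Finset.sum_le_sum
    intro i _
    apply pow_le_pow_left₀
    · apply add_nonneg (add_nonneg (abs_nonneg _) (hbbar i))
      simp only [Matrix.mulVec, dotProduct]
      apply Finset.sum_nonneg
      intro j _
      exact mul_nonneg (hAbar i j) (abs_nonneg _)
    · simp only [Pi.add_apply]
      have h1 : γ₀ t.1 i ≤ t.2.1 i := abs_le.2 ⟨(hγ i).1, (hγ i).2⟩
      have h2 : (Abar.mulVec (ν₀ t.1)) i ≤ (Abar.mulVec t.2.2) i := by
        simp only [Matrix.mulVec, dotProduct]
        apply Finset.sum_le_sum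
        intro j _
        exact mul_le_mul_of_nonneg_left (abs_le.2 ⟨(hν j).1, (hν j).2⟩) (hAbar i j)
      linarith
  have hWle : ∀ t ∈ feas, W t.1 ≤ obj t := fun t ht => (hWeq t.1).trans_le (hle t ht)
  have hobjnn : ∀ t, 0 ≤ obj t := fun t => (hobj t) ▸ enorm_sq_nonneg _
  have hbbO : BddBelow (obj '' feas) := ⟨0, by rintro x ⟨t, _, rfl⟩; exact hobjnn t⟩
  have hbbW : BddBelow (W '' 𝒢) := ⟨0, by
    rintro x ⟨g, hg, rfl⟩; rw [hWeq]; exact hobjnn _⟩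
  have hneW : (W '' 𝒢).Nonempty := h𝒢.image W
  have hneO : (obj '' feas).Nonempty := by
    obtain ⟨g, hg⟩ := h𝒢
    exact ⟨_, ⟨_, hfeas0 g hg, rfl⟩⟩
  have hsub : W '' 𝒢 ⊆ obj '' feas := by
    rintro x ⟨g, hg, rfl⟩
    exact ⟨(g, γ₀ g, ν₀ g), hfeas0 g hg, (hWeq g).symm⟩
  have hA : sInf (W '' 𝒢) = sInf (obj '' feas) := by
    apply le_antisymm
    · apply le_csInf hneO
      rintro x ⟨t, ht, rfl⟩
      have ht1 : t.1 ∈ 𝒢 := by rw [hfeas] at ht; exact ht.1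
      exact (csInf_le hbbW ⟨t.1, ht1, rfl⟩).trans (hWle t ht)
    · exact csInf_le_csInf hbbO hneW hsub
  refine ⟨hA, ?_, ?_⟩
  · intro gs hgs
    constructor
    · intro hmin
      refine ⟨γ₀ gs, ν₀ gs, hfeas0 gs hgs, ?_⟩
      intro t ht
      have ht1 : t.1 ∈ 𝒢 := by rw [hfeas] at ht; exact ht.1
      calc obj (gs, γ₀ gs, ν₀ gs) = W gs := (hWeq gs).symm
        _ ≤ W t.1 := hmin t.1 ht1
        _ ≤ obj t := hWle t ht
    · rintro ⟨γ, ν, hf, hm⟩ g hg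
      have h1 : obj ((gs, γ, ν).1, γ₀ (gs, γ, ν).1, ν₀ (gs, γ, ν).1) ≤ obj (gs, γ, ν) :=
        hle _ hf
      calc W gs = obj (gs, γ₀ gs, ν₀ gs) := hWeq gs
        _ ≤ obj (gs, γ, ν) := h1
        _ ≤ obj (g, γ₀ g, ν₀ g) := hm _ (hfeas0 g hg)
        _ = W g := (hWeq g).symm
  · intro gs γ ν hf hm
    have : sInf (obj '' feas) = obj (gs, γ, ν) := by
      apply le_antisymm (csInf_le hbbO ⟨_, hf, rfl⟩)
      apply le_csInf hneO
      rintro x ⟨t, ht, rfl⟩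
      exact hm t ht
    rw [hA, this, hobj]
end

section
/- Let A ∈ ℝ^{m×n}, b ∈ ℝ^m, λ_g > 0, and let 𝒢 ⊆ ℝ^n be a nonempty closed convex set. Suppose g* ∈ 𝒢, g* ≠ 0, minimizes ‖Ag − b‖² + λ_g‖g‖² over 𝒢. Define ρ_u := λ_g·√(‖g*‖² + 1) / ‖Ag* − b‖ if Ag* ≠ b, and ρ_u := λ_g·√(‖g*‖² + 1) otherwise. Then g* also minimizes ‖Ag − b‖ + ρ_u·√(‖g‖² + 1) over 𝒢. -/
open Matrix

/-- Euclidean norm of a vector in `ℝ^n`. -/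
noncomputable def enormVec {n : ℕ} (x : Fin n → ℝ) : ℝ := Real.sqrt (∑ i, x i ^ 2)

private lemma sq_enorm' {n : ℕ} (x : Fin n → ℝ) : (enormVec x) ^ 2 = ∑ i, x i ^ 2 :=
  Real.sq_sqrt (Finset.sum_nonneg fun _ _ => sq_nonneg _)

private lemma enorm_nonneg' {n : ℕ} (x : Fin n → ℝ) : 0 ≤ enormVec x := Real.sqrt_nonneg _

private lemma enormVec_pos' {n : ℕ} {x : Fin n → ℝ} (hx : x ≠ 0) : 0 < enormVec x := by
  rcases Function.ne_iff.mp hx with ⟨i, hi⟩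
  apply Real.sqrt_pos.mpr
  have h1 : 0 < x i ^ 2 := by
    have : x i ≠ 0 := by simpa using hi
    positivity
  exact h1.trans_le (Finset.single_le_sum (f := fun j => x j ^ 2) (fun j _ => sq_nonneg _) (Finset.mem_univ i))

private lemma cs' {n : ℕ} (x y : Fin n → ℝ) :
    (∑ i, x i * y i) ≤ enormVec x * enormVec y := by
  calc ∑ i, x i * y i ≤ Real.sqrt ((∑ i, x i * y i) ^ 2) := by
        rw [Real.sqrt_sq_eq_abs]; exact le_abs_self _
    _ ≤ Real.sqrt ((∑ i, x i ^ 2) * (∑ i, y i ^ 2)) :=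
        Real.sqrt_le_sqrt (Finset.sum_mul_sq_le_sq_mul_sq _ _ _)
    _ = enormVec x * enormVec y := by
        rw [Real.sqrt_mul (Finset.sum_nonneg fun _ _ => sq_nonneg _)]; rfl

private lemma cs1' {n : ℕ} (x y : Fin n → ℝ) :
    (∑ i, x i * y i) + 1 ≤ Real.sqrt ((enormVec x) ^ 2 + 1) * Real.sqrt ((enormVec y) ^ 2 + 1) := by
  have hx : (0:ℝ) ≤ (enormVec x) ^ 2 + 1 := by positivity
  have h1 := cs' x y
  have h2 : -(∑ i, x i * y i) ≤ enormVec x * enormVec y := by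
    have h := cs' x (-y)
    have e : enormVec (-y) = enormVec y := by simp [enormVec]
    rw [e] at h
    have e2 : ∑ i, x i * (-y) i = -∑ i, x i * y i := by
      simp [mul_comm]
    rwa [e2] at h
  have hex := sq_enorm' x
  have hey := sq_enorm' y
  rw [← Real.sqrt_mul hx]
  rcases le_or_gt ((∑ i, x i * y i) + 1) 0 with h | h
  · exact h.trans (Real.sqrt_nonneg _)
  · rw [Real.le_sqrt h.le (by positivity)]
    nlinarith [sq_nonneg (enormVec x - enormVec y), mul_nonneg (enorm_nonneg' x) (enorm_nonneg' y),
      sq_nonneg (enormVec x * enormVec y - ∑ i, x i * y i)]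

/-- Theorem 2 of the paper (robustness induced by quadratic regularization): a nonzero
minimizer of the quadratically regularized problem also minimizes the conic objective
`‖Ag − b‖ + ρ_u √(‖g‖² + 1)` with the uncertainty bound `ρ_u` given by eq. (34). -/
theorem quadratic_regularization_robustness
    (m n : ℕ) (A : Matrix (Fin m) (Fin n) ℝ) (b : Fin m → ℝ)
    (lamg : ℝ) (hlamg : 0 < lamg)
    (𝒢 : Set (Fin n → ℝ)) (h𝒢ne : 𝒢.Nonempty) (h𝒢cl : IsClosed 𝒢) (h𝒢cv : Convex ℝ 𝒢)
    (gs : Fin n → ℝ) (hgs : gs ∈ 𝒢) (hgs0 : gs ≠ 0)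
    (hmin : ∀ g ∈ 𝒢,
      (enormVec (A.mulVec gs - b)) ^ 2 + lamg * (enormVec gs) ^ 2
        ≤ (enormVec (A.mulVec g - b)) ^ 2 + lamg * (enormVec g) ^ 2)
    (ρu : ℝ)
    (hρu1 : A.mulVec gs ≠ b →
      ρu = lamg * Real.sqrt ((enormVec gs) ^ 2 + 1) / enormVec (A.mulVec gs - b))
    (hρu2 : A.mulVec gs = b → ρu = lamg * Real.sqrt ((enormVec gs) ^ 2 + 1)) :
    ∀ g ∈ 𝒢,
      enormVec (A.mulVec gs - b) + ρu * Real.sqrt ((enormVec gs) ^ 2 + 1)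
        ≤ enormVec (A.mulVec g - b) + ρu * Real.sqrt ((enormVec g) ^ 2 + 1) := by
  intro g hg
  classical
  set v : Fin m → ℝ := A.mulVec gs - b with hv
  set d : Fin n → ℝ := g - gs with hd
  set w : Fin m → ℝ := A.mulVec d with hw
  set ss : ℝ := Real.sqrt ((enormVec gs) ^ 2 + 1) with hss
  set s : ℝ := Real.sqrt ((enormVec g) ^ 2 + 1) with hs
  have hAg : A.mulVec g - b = v + w := by
    rw [hv, hw, hd, Matrix.mulVec_sub]
    abel
  have hsspos : 0 < ss := Real.sqrt_pos.mpr (by positivity)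
  have hsnn : 0 ≤ s := Real.sqrt_nonneg _
  have hss2 : ss ^ 2 = (enormVec gs) ^ 2 + 1 := Real.sq_sqrt (by positivity)
  have hgs2 : (enormVec gs) ^ 2 = ∑ i, gs i ^ 2 := sq_enorm' gs
  -- first-order optimality: L ≥ 0
  set L : ℝ := (∑ i, v i * w i) + lamg * (∑ i, gs i * d i) with hLdef
  have hLnn : 0 ≤ L := by
    set Q : ℝ := (∑ i, w i ^ 2) + lamg * (∑ i, d i ^ 2) with hQdef
    have hQnn : 0 ≤ Q := by
      have h1 : (0:ℝ) ≤ ∑ i, w i ^ 2 := Finset.sum_nonneg fun _ _ => sq_nonneg _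
      have h2 : (0:ℝ) ≤ ∑ i, d i ^ 2 := Finset.sum_nonneg fun _ _ => sq_nonneg _
      nlinarith
    have key : ∀ t : ℝ, 0 < t → t ≤ 1 → 0 ≤ 2 * L + t * Q := by
      intro t ht0 ht1
      have hmem : gs + t • d ∈ 𝒢 := by
        have h := h𝒢cv hgs hg (by linarith : (0:ℝ) ≤ 1 - t) ht0.le (by ring)
        convert h using 1
        ext i
        simp [hd]
        ring
      have h1 := hmin _ hmem
      have e1 : A.mulVec (gs + t • d) - b = fun i => v i + t * w i := by
        rw [Matrix.mulVec_add, Matrix.mulVec_smul, hv, hw]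
        ext i; simp; ring
      rw [e1, sq_enorm', sq_enorm', sq_enorm', sq_enorm'] at h1
      have e2 : ∑ i, (fun i => v i + t * w i) i ^ 2
          = (∑ i, v i ^ 2) + 2 * t * (∑ i, v i * w i) + t ^ 2 * (∑ i, w i ^ 2) := by
        rw [Finset.mul_sum, Finset.mul_sum, ← Finset.sum_add_distrib, ← Finset.sum_add_distrib]
        exact Finset.sum_congr rfl fun i _ => by ring
      have e3 : ∑ i, (gs + t • d) i ^ 2
          = (∑ i, gs i ^ 2) + 2 * t * (∑ i, gs i * d i) + t ^ 2 * (∑ i, d i ^ 2) := by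
        rw [Finset.mul_sum, Finset.mul_sum, ← Finset.sum_add_distrib, ← Finset.sum_add_distrib]
        refine Finset.sum_congr rfl fun i _ => by simp; ring
      rw [e2, e3] at h1
      have h2 : 0 ≤ t * (2 * L + t * Q) := by rw [hLdef, hQdef]; nlinarith [h1]
      have h3 : t * 0 ≤ t * (2 * L + t * Q) := by simpa using h2
      exact le_of_mul_le_mul_left h3 ht0
    by_contra hneg
    push_neg at hneg
    rcases eq_or_lt_of_le hQnn with hQ0 | hQpos
    · have := key 1 one_pos le_rfl
      rw [← hQ0] at this; linarith
    · have ht0 : 0 < -L / Q := div_pos (by linarith) hQpos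
      have h1 : 0 < min 1 (-L / Q) := lt_min one_pos ht0
      have h3 := key _ h1 (min_le_left _ _)
      have h4 : min 1 (-L / Q) * Q ≤ (-L / Q) * Q :=
        mul_le_mul_of_nonneg_right (min_le_right _ _) hQpos.le
      rw [div_mul_cancel₀ _ hQpos.ne'] at h4
      linarith
  -- Cauchy–Schwarz consequences
  have hB := cs1' gs g
  rw [← hss, ← hs] at hB
  have eB : ∑ i, gs i * g i = (∑ i, gs i ^ 2) + ∑ i, gs i * d i := by
    rw [← Finset.sum_add_distrib]
    refine Finset.sum_congr rfl fun i _ => by simp [hd]; ring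
  rw [eB] at hB
  rcases eq_or_ne (A.mulVec gs) b with heq | hne
  · -- case A gs = b
    have hvz : v = 0 := by rw [hv, heq, sub_self]
    have hρ := hρu2 heq
    have hv0 : enormVec v = 0 := by rw [hvz]; simp [enormVec]
    have hvw0 : (∑ i, v i * w i) = 0 := by simp [hvz]
    have hgsd : 0 ≤ ∑ i, gs i * d i := by
      rw [hLdef, hvw0, zero_add] at hLnn
      nlinarith
    have hsge : ss ≤ s := by
      have h1 : ss * ss ≤ ss * s := by nlinarith
      exact le_of_mul_le_mul_left h1 hsspos
    have hρnn : 0 ≤ ρu := by rw [hρ]; exact mul_nonneg hlamg.le hsspos.le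
    have hrnn : 0 ≤ enormVec (A.mulVec g - b) := enorm_nonneg' _
    rw [hv0]
    nlinarith
  · -- case A gs ≠ b
    have hvpos : 0 < enormVec v := enormVec_pos' (by rw [hv]; exact sub_ne_zero.mpr hne)
    have hρ := hρu1 hne
    have hρr : ρu * enormVec v = lamg * ss := by
      rw [hρ]; field_simp
    have hρnn : 0 ≤ ρu := by
      rw [hρ]; positivity
    have hA := cs' v (v + w)
    have eA : ∑ i, v i * (v + w) i = (∑ i, v i ^ 2) + ∑ i, v i * w i := by
      rw [← Finset.sum_add_distrib]
      refine Finset.sum_congr rfl fun i _ => by simp; ring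
    rw [eA] at hA
    have hv2 : (enormVec v) ^ 2 = ∑ i, v i ^ 2 := sq_enorm' v
    rw [hAg]
    have h3 : enormVec v * (ρu * s) = lamg * (ss * s) := by
      have : ρu * enormVec v * s = lamg * ss * s := by rw [hρr]
      linarith [this]
    have h4 : enormVec v * (ρu * ss) = lamg * (ss * ss) := by
      have : ρu * enormVec v * ss = lamg * ss * ss := by rw [hρr]
      linarith [this]
    have hB' : lamg * ((∑ i, gs i ^ 2) + (∑ i, gs i * d i) + 1) ≤ lamg * (ss * s) :=
      mul_le_mul_of_nonneg_left hB hlamg.le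
    have hss2' : lamg * (ss * ss) = lamg * ((∑ i, gs i ^ 2) + 1) := by
      rw [← hgs2, ← hss2]; ring
    have hgoal : enormVec v * (enormVec v + ρu * ss) ≤ enormVec v * (enormVec (v + w) + ρu * s) := by
      linarith [hA, hB', hLnn, hLdef, h3, h4, hv2, hss2']
    exact le_of_mul_le_mul_left hgoal hvpos
end
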